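/- Let θ > 0 and let (M_k)_{k≥2} be a sequence of independent random variables on a probability space with P(M_k = j) = ((k-1)/(θ+k-1)) · (θ/(θ+k-1))^j for all j ∈ ℕ₀, and set B_k = 1{M_k ≥ 1}. Then (1/√(log n)) · ∑_{k=2}^{n} (M_k - B_k) → 0 in L² as n → ∞, i.e., E[ ( ∑_{k=2}^{n}(M_k - B_k) )² ] / log n → 0. -/

import Mathlib

open MeasureTheory ProbabilityTheory Filter

private lemma ind_cast (j : ℕ) : ((j - 1 : ℕ) : ℝ) = (j : ℝ) - (if 1 ≤ j then 1 else 0) := by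
  cases j with
  | zero => simp
  | succ n => simp [Nat.succ_sub_one]

private lemma ind_sq_cast (j : ℕ) :
    ((j - 1 : ℕ) : ℝ) ^ 2 = (j : ℝ) ^ 2 - 2 * j + (if 1 ≤ j then 1 else 0) := by
  cases j with
  | zero => simp
  | succ n => simp only [Nat.succ_sub_one, Nat.one_le_iff_ne_zero, Nat.succ_ne_zero,
      ne_eq, not_false_iff, if_pos, Nat.add_eq, Nat.cast_succ]; push_cast; ring

private lemma geom_moments {p : ℝ} (h0 : 0 ≤ p) (h1 : p < 1) :
    HasSum (fun j : ℕ => ((j - 1 : ℕ) : ℝ) * ((1 - p) * p ^ j)) (p ^ 2 / (1 - p)) ∧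
    HasSum (fun j : ℕ => ((j - 1 : ℕ) : ℝ) ^ 2 * ((1 - p) * p ^ j))
      (p ^ 2 * (1 + p) / (1 - p) ^ 2) := by
  have hne : (1 : ℝ) - p ≠ 0 := by linarith
  have hr : ‖p‖ < 1 := by rwa [Real.norm_eq_abs, abs_of_nonneg h0]
  have S0 : HasSum (fun j : ℕ => p ^ j) (1 - p)⁻¹ := hasSum_geometric_of_lt_one h0 h1
  have S1 : HasSum (fun j : ℕ => (j : ℝ) * p ^ j) (p / (1 - p) ^ 2) :=
    hasSum_coe_mul_geometric_of_norm_lt_one hr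
  have SC : HasSum (fun j : ℕ => (((j + 2).choose 2 : ℕ) : ℝ) * p ^ j) (1 / (1 - p) ^ 3) :=
    hasSum_choose_mul_geometric_of_norm_lt_one 2 hr
  have S2 : HasSum (fun j : ℕ => (j : ℝ) ^ 2 * p ^ j)
      (2 * (1 / (1 - p) ^ 3) - 3 * (p / (1 - p) ^ 2) - 2 * (1 - p)⁻¹) := by
    have := ((SC.mul_left 2).sub (S1.mul_left 3)).sub (S0.mul_left 2)
    convert this using 1
    rfl
    funext j
    have hc : (((j + 2).choose 2 : ℕ) : ℝ) = ((j : ℝ) + 2) * ((j : ℝ) + 1) / 2 := by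
      rw [Nat.cast_choose_two]
      push_cast
      ring
    rw [hc]; ring
  have SB : HasSum (fun j : ℕ => (if 1 ≤ j then (1:ℝ) else 0) * p ^ j) ((1 - p)⁻¹ - 1) := by
    have := S0.sub (hasSum_ite_eq 0 (1 : ℝ))
    convert this using 1
    rfl
    funext j
    cases j with
    | zero => simp
    | succ n => simp
  constructor
  · have := (S1.mul_left (1 - p)).sub (SB.mul_left (1 - p))
    have h2 : (1 - p) * (p / (1 - p) ^ 2) - (1 - p) * ((1 - p)⁻¹ - 1) = p ^ 2 / (1 - p) := by
      field_simp; ring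
    rw [h2] at this
    convert this using 1
    rfl
    funext j
    rw [ind_cast]; ring
  · have := ((S2.mul_left (1 - p)).sub (S1.mul_left (2 * (1 - p)))).add (SB.mul_left (1 - p))
    have h2 : (1 - p) * (2 * (1 / (1 - p) ^ 3) - 3 * (p / (1 - p) ^ 2) - 2 * (1 - p)⁻¹)
        - 2 * (1 - p) * (p / (1 - p) ^ 2) + (1 - p) * ((1 - p)⁻¹ - 1)
        = p ^ 2 * (1 + p) / (1 - p) ^ 2 := by
      field_simp; ring
    rw [h2] at this
    convert this using 1
    rfl
    funext j
    rw [ind_sq_cast]; ring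

private lemma moment_eq {Ω : Type*} [MeasurableSpace Ω] (μ : Measure Ω)
    (X : Ω → ℕ) (hX : Measurable X) (w : ℕ → ℝ) (hw : ∀ j, 0 ≤ w j)
    (hlaw : ∀ j, μ {ω | X ω = j} = ENNReal.ofReal (w j))
    (f : ℕ → ℝ) (hf : ∀ j, 0 ≤ f j) {v : ℝ}
    (hsum : HasSum (fun j => f j * w j) v) :
    Integrable (fun ω => f (X ω)) μ ∧ ∫ ω, f (X ω) ∂μ = v := by
  set ν := μ.map X with hν_def
  have hν : ∀ j, ν {j} = ENNReal.ofReal (w j) := by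
    intro j
    rw [hν_def, Measure.map_apply hX (measurableSet_singleton j)]
    have : X ⁻¹' {j} = {ω | X ω = j} := rfl
    rw [this]; exact hlaw j
  have hfm : AEStronglyMeasurable f ν := measurable_from_nat.aestronglyMeasurable
  have hIf : Integrable f ν := by
    refine ⟨hfm, ?_⟩
    rw [HasFiniteIntegral]
    have h1 : ∫⁻ j, ‖f j‖ₑ ∂ν = ∑' j, ‖f j‖ₑ * ν {j} :=
      lintegral_countable' _
    rw [h1]
    have h2 : ∀ j : ℕ, ‖f j‖ₑ * ν {j} = ENNReal.ofReal (f j * w j) := by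
      intro j
      rw [hν j, Real.enorm_eq_ofReal (hf j), ← ENNReal.ofReal_mul (hf j)]
    simp_rw [h2]
    rw [← ENNReal.ofReal_tsum_of_nonneg (fun j => mul_nonneg (hf j) (hw j)) hsum.summable]
    exact ENNReal.ofReal_lt_top
  have hint : Integrable (fun ω => f (X ω)) μ :=
    (integrable_map_measure hfm hX.aemeasurable).mp hIf
  refine ⟨hint, ?_⟩
  have h3 : ∫ ω, f (X ω) ∂μ = ∫ j, f j ∂ν :=
    (integral_map hX.aemeasurable hfm).symm
  rw [h3, integral_countable' hIf]
  have h4 : ∀ j : ℕ, ν.real {j} • f j = f j * w j := by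
    intro j
    rw [measureReal_def, hν j, ENNReal.toReal_ofReal (hw j), smul_eq_mul, mul_comm]
  simp_rw [h4]
  exact hsum.tsum_eq

private lemma geom_bounds {Ω : Type*} [MeasurableSpace Ω] (μ : Measure Ω)
    (θ : ℝ) (hθ : 0 < θ) (X : Ω → ℕ) (hX : Measurable X) (k : ℕ) (hk : 2 ≤ k)
    (hlaw : ∀ j : ℕ, μ {ω | X ω = j} =
      ENNReal.ofReal (((k : ℝ) - 1) / (θ + k - 1) * (θ / (θ + k - 1)) ^ j)) :
    Integrable (fun ω => ((X ω - 1 : ℕ) : ℝ)) μ ∧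
    Integrable (fun ω => ((X ω - 1 : ℕ) : ℝ) ^ 2) μ ∧
    0 ≤ ∫ ω, ((X ω - 1 : ℕ) : ℝ) ∂μ ∧
    (∫ ω, ((X ω - 1 : ℕ) : ℝ) ∂μ) ≤ θ ^ 2 / ((k : ℝ) - 1) ^ 2 ∧
    (∫ ω, ((X ω - 1 : ℕ) : ℝ) ^ 2 ∂μ) ≤ 2 * θ ^ 2 / ((k : ℝ) - 1) ^ 2 := by
  have hk1 : (1 : ℝ) ≤ (k : ℝ) - 1 := by
    have : (2 : ℝ) ≤ (k : ℝ) := by exact_mod_cast hk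
    linarith
  have hc : 0 < θ + (k : ℝ) - 1 := by linarith
  have h0p : 0 ≤ θ / (θ + (k : ℝ) - 1) := le_of_lt (div_pos hθ hc)
  have h1p : θ / (θ + (k : ℝ) - 1) < 1 := by
    rw [div_lt_one hc]; linarith
  set p := θ / (θ + (k : ℝ) - 1) with hp_def
  have h1mp : 1 - p = ((k : ℝ) - 1) / (θ + (k : ℝ) - 1) := by
    rw [hp_def]
    field_simp
    ring
  have hlaw' : ∀ j : ℕ, μ {ω | X ω = j} = ENNReal.ofReal ((1 - p) * p ^ j) := by
    intro j
    rw [hlaw j, h1mp]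
  have hw : ∀ j : ℕ, 0 ≤ (1 - p) * p ^ j := fun j => mul_nonneg (by linarith) (pow_nonneg h0p j)
  obtain ⟨hs1, hs2⟩ := geom_moments h0p h1p
  obtain ⟨hI1, hE1⟩ := moment_eq μ X hX _ hw hlaw' (fun j => ((j - 1 : ℕ) : ℝ))
    (fun j => Nat.cast_nonneg _) hs1
  obtain ⟨hI2, hE2⟩ := moment_eq μ X hX _ hw hlaw' (fun j => ((j - 1 : ℕ) : ℝ) ^ 2)
    (fun j => sq_nonneg _) hs2
  have hkpos : (0:ℝ) < (k : ℝ) - 1 := by linarith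
  have he1 : p ^ 2 / (1 - p) = θ ^ 2 / ((θ + (k : ℝ) - 1) * ((k : ℝ) - 1)) := by
    rw [h1mp, hp_def]
    field_simp
  have he2 : p ^ 2 * (1 + p) / (1 - p) ^ 2
      = θ ^ 2 * ((θ + (k : ℝ) - 1) + θ) / ((θ + (k : ℝ) - 1) * ((k : ℝ) - 1) ^ 2) := by
    rw [h1mp, hp_def]
    field_simp
  have hmul : ((k:ℝ)-1) * ((k:ℝ)-1) ≤ (θ+(k:ℝ)-1) * ((k:ℝ)-1) := by nlinarith
  have hmul2 : (θ+(k:ℝ)-1+θ) * (((k:ℝ)-1)^2) ≤ (2*(θ+(k:ℝ)-1)) * (((k:ℝ)-1)^2) := by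
    nlinarith [sq_nonneg ((k:ℝ)-1)]
  refine ⟨hI1, hI2, ?_, ?_, ?_⟩
  · rw [hE1, he1]; positivity
  · rw [hE1, he1, div_le_div_iff₀ (by positivity) (by positivity)]
    nlinarith [mul_le_mul_of_nonneg_left hmul (sq_nonneg θ)]
  · rw [hE2, he2, div_le_div_iff₀ (by positivity) (by positivity)]
    nlinarith [mul_le_mul_of_nonneg_left hmul2 (sq_nonneg θ)]

private lemma inv_sq_sum_bound (n : ℕ) :
    ∑ k ∈ Finset.Icc 2 n, (1:ℝ) / ((k : ℝ) - 1) ^ 2 ≤ 2 := by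
  have aux : ∀ m : ℕ, 1 ≤ m →
      ∑ k ∈ Finset.Icc 2 m, (1:ℝ) / ((k : ℝ) - 1) ^ 2 ≤ 2 - 2 / (m : ℝ) := by
    intro m hm
    induction m, hm using Nat.le_induction with
    | base => simp
    | succ m hm ih =>
      rw [Finset.sum_Icc_succ_top (by omega : 2 ≤ m + 1)]
      have hm' : (1:ℝ) ≤ (m : ℝ) := by exact_mod_cast hm
      have hcast : ((m + 1 : ℕ) : ℝ) - 1 = (m : ℝ) := by push_cast; ring
      rw [hcast]
      have h1 : (1:ℝ) / (m : ℝ) ^ 2 ≤ 2 / (m : ℝ) - 2 / ((m : ℝ) + 1) := by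
        rw [div_sub_div _ _ (by positivity) (by positivity),
          div_le_div_iff₀ (by positivity) (by positivity)]
        nlinarith
      have hcast2 : ((m + 1 : ℕ) : ℝ) = (m : ℝ) + 1 := by push_cast; ring
      rw [hcast2]
      linarith
  rcases Nat.lt_or_ge n 1 with hn | hn
  · interval_cases n
    simp
  · have := aux n hn
    have hn' : (1:ℝ) ≤ (n : ℝ) := by exact_mod_cast hn
    have : 0 ≤ 2 / (n:ℝ) := by positivity
    linarith [aux n hn]

/-- `L²` convergence of the difference between the number of segregating sites and the
number of cycles: if `(M_k)_{k≥2}` are independent geometrics with success parameters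
`(k-1)/(θ+k-1)` and `B_k = 1{M_k ≥ 1}`, then
`E[(∑_{k=2}^n (M_k - B_k))²]/log n → 0` as `n → ∞`. -/
theorem sites_sub_cycles_L2_tendsto_zero {Ω : Type*} [MeasurableSpace Ω]
    (μ : Measure Ω) [IsProbabilityMeasure μ]
    (θ : ℝ) (hθ : 0 < θ)
    (M : ℕ → Ω → ℕ) (hmeas : ∀ k, Measurable (M k))
    (hindep : iIndepFun
      (fun k : {k : ℕ // 2 ≤ k} => M k.val) μ)
    (hlaw : ∀ k, 2 ≤ k → ∀ j : ℕ, μ {ω | M k ω = j} =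
      ENNReal.ofReal (((k : ℝ) - 1) / (θ + k - 1) * (θ / (θ + k - 1)) ^ j)) :
    Tendsto
      (fun n : ℕ =>
        (∫ ω, (∑ k ∈ Finset.Icc 2 n,
            ((M k ω : ℝ) - if 1 ≤ M k ω then 1 else 0)) ^ 2 ∂μ) / Real.log n)
      atTop (nhds 0) := by
  set N : ℕ → Ω → ℝ := fun k ω => ((M k ω - 1 : ℕ) : ℝ) with hN_def
  have hfun : ∀ n : ℕ,
      (∫ ω, (∑ k ∈ Finset.Icc 2 n, ((M k ω : ℝ) - if 1 ≤ M k ω then 1 else 0)) ^ 2 ∂μ)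
      = ∫ ω, (∑ k ∈ Finset.Icc 2 n, N k ω) ^ 2 ∂μ := by
    intro n
    congr 1
    funext ω
    congr 1
    refine Finset.sum_congr rfl fun k _ => ?_
    exact (ind_cast (M k ω)).symm
  -- per-k moment facts
  have hGB : ∀ k, 2 ≤ k →
      Integrable (N k) μ ∧ Integrable (fun ω => N k ω ^ 2) μ ∧
      0 ≤ ∫ ω, N k ω ∂μ ∧ (∫ ω, N k ω ∂μ) ≤ θ ^ 2 / ((k : ℝ) - 1) ^ 2 ∧
      (∫ ω, N k ω ^ 2 ∂μ) ≤ 2 * θ ^ 2 / ((k : ℝ) - 1) ^ 2 :=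
    fun k hk => geom_bounds μ θ hθ (M k) (hmeas k) k hk (hlaw k hk)
  -- independence of the transformed variables
  have hNindep : ∀ j k, 2 ≤ j → 2 ≤ k → j ≠ k → IndepFun (N j) (N k) μ := by
    intro j k hj hk hjk
    have h := hindep.indepFun (i := (⟨j, hj⟩ : {k : ℕ // 2 ≤ k})) (j := ⟨k, hk⟩)
      (by simp [Subtype.ext_iff, hjk])
    exact h.comp (measurable_from_nat (f := fun m : ℕ => ((m - 1 : ℕ) : ℝ)))
      (measurable_from_nat (f := fun m : ℕ => ((m - 1 : ℕ) : ℝ)))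
  -- product bounds
  have hprod : ∀ j k, 2 ≤ j → 2 ≤ k →
      Integrable (fun ω => N j ω * N k ω) μ ∧
      (∫ ω, N j ω * N k ω ∂μ) ≤ θ ^ 2 / ((j : ℝ) - 1) ^ 2 * (θ ^ 2 / ((k : ℝ) - 1) ^ 2)
        + (if j = k then 2 * θ ^ 2 / ((j : ℝ) - 1) ^ 2 else 0) := by
    intro j k hj hk
    by_cases hjk : j = k
    · subst hjk
      constructor
      · have := (hGB j hj).2.1
        simpa [sq] using this
      · rw [if_pos rfl]
        have h1 : (∫ ω, N j ω * N j ω ∂μ) = ∫ ω, N j ω ^ 2 ∂μ := by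
          congr 1; funext ω; rw [sq]
        rw [h1]
        have h2 := (hGB j hj).2.2.2.2
        have hnn : 0 ≤ θ ^ 2 / ((j : ℝ) - 1) ^ 2 * (θ ^ 2 / ((j : ℝ) - 1) ^ 2) := by positivity
        linarith
    · have hI := hNindep j k hj hk hjk
      constructor
      · exact hI.integrable_mul (hGB j hj).1 (hGB k hk).1
      · have heq : (∫ ω, N j ω * N k ω ∂μ) = (∫ ω, N j ω ∂μ) * ∫ ω, N k ω ∂μ :=
          hI.integral_mul_eq_mul_integral (hGB j hj).1.1 (hGB k hk).1.1
        rw [heq, if_neg hjk, add_zero]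
        exact mul_le_mul (hGB j hj).2.2.2.1 (hGB k hk).2.2.2.1 (hGB k hk).2.2.1 (by positivity)
  -- uniform bound on the second moment of the sum
  have key : ∀ n : ℕ, (∫ ω, (∑ k ∈ Finset.Icc 2 n, N k ω) ^ 2 ∂μ) ≤ 4 * θ ^ 4 + 4 * θ ^ 2 := by
    intro n
    set s := Finset.Icc 2 n with hs_def
    have hmem : ∀ k ∈ s, 2 ≤ k := fun k hk => (Finset.mem_Icc.mp hk).1
    have h1 : (∫ ω, (∑ k ∈ s, N k ω) ^ 2 ∂μ)
        = ∑ j ∈ s, ∑ k ∈ s, ∫ ω, N j ω * N k ω ∂μ := by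
      have hexp : (fun ω => (∑ k ∈ s, N k ω) ^ 2)
          = fun ω => ∑ j ∈ s, ∑ k ∈ s, N j ω * N k ω := by
        funext ω; rw [sq, Finset.sum_mul_sum]
      calc (∫ ω, (∑ k ∈ s, N k ω) ^ 2 ∂μ)
          = ∫ ω, ∑ j ∈ s, ∑ k ∈ s, N j ω * N k ω ∂μ := by rw [hexp]
        _ = ∑ j ∈ s, ∫ ω, ∑ k ∈ s, N j ω * N k ω ∂μ := by
            refine integral_finset_sum s fun j hj => ?_
            exact integrable_finset_sum s fun k hk =>
              (hprod j k (hmem j hj) (hmem k hk)).1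
        _ = ∑ j ∈ s, ∑ k ∈ s, ∫ ω, N j ω * N k ω ∂μ := by
            refine Finset.sum_congr rfl fun j hj => ?_
            exact integral_finset_sum s fun k hk => (hprod j k (hmem j hj) (hmem k hk)).1
    rw [h1]
    have h2 : ∑ j ∈ s, ∑ k ∈ s, (∫ ω, N j ω * N k ω ∂μ)
        ≤ ∑ j ∈ s, ∑ k ∈ s, (θ ^ 2 / ((j : ℝ) - 1) ^ 2 * (θ ^ 2 / ((k : ℝ) - 1) ^ 2)
          + (if j = k then 2 * θ ^ 2 / ((j : ℝ) - 1) ^ 2 else 0)) := by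
      refine Finset.sum_le_sum fun j hj => Finset.sum_le_sum fun k hk => ?_
      exact (hprod j k (hmem j hj) (hmem k hk)).2
    have hT : ∑ k ∈ s, (1:ℝ) / ((k : ℝ) - 1) ^ 2 ≤ 2 := inv_sq_sum_bound n
    have hTnn : 0 ≤ ∑ k ∈ s, (1:ℝ) / ((k : ℝ) - 1) ^ 2 :=
      Finset.sum_nonneg fun k _ => by positivity
    have ha : ∑ k ∈ s, θ ^ 2 / ((k : ℝ) - 1) ^ 2
        = θ ^ 2 * ∑ k ∈ s, (1:ℝ) / ((k : ℝ) - 1) ^ 2 := by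
      rw [Finset.mul_sum]
      refine Finset.sum_congr rfl fun k _ => ?_
      ring
    have h3 : ∑ j ∈ s, ∑ k ∈ s, (θ ^ 2 / ((j : ℝ) - 1) ^ 2 * (θ ^ 2 / ((k : ℝ) - 1) ^ 2)
          + (if j = k then 2 * θ ^ 2 / ((j : ℝ) - 1) ^ 2 else 0))
        = (∑ k ∈ s, θ ^ 2 / ((k : ℝ) - 1) ^ 2) ^ 2
          + ∑ j ∈ s, 2 * θ ^ 2 / ((j : ℝ) - 1) ^ 2 := by
      have hinner : ∀ j ∈ s, ∑ k ∈ s, (θ ^ 2 / ((j : ℝ) - 1) ^ 2 * (θ ^ 2 / ((k : ℝ) - 1) ^ 2)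
            + (if j = k then 2 * θ ^ 2 / ((j : ℝ) - 1) ^ 2 else 0))
          = θ ^ 2 / ((j : ℝ) - 1) ^ 2 * (∑ k ∈ s, θ ^ 2 / ((k : ℝ) - 1) ^ 2)
            + 2 * θ ^ 2 / ((j : ℝ) - 1) ^ 2 := by
        intro j hj
        rw [Finset.sum_add_distrib, ← Finset.mul_sum, Finset.sum_ite_eq, if_pos hj]
      rw [Finset.sum_congr rfl hinner, Finset.sum_add_distrib, ← Finset.sum_mul]
      ring
    have hb : ∑ j ∈ s, 2 * θ ^ 2 / ((j : ℝ) - 1) ^ 2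
        = 2 * θ ^ 2 * ∑ k ∈ s, (1:ℝ) / ((k : ℝ) - 1) ^ 2 := by
      rw [Finset.mul_sum]
      refine Finset.sum_congr rfl fun k _ => ?_
      ring
    calc ∑ j ∈ s, ∑ k ∈ s, (∫ ω, N j ω * N k ω ∂μ)
        ≤ (∑ k ∈ s, θ ^ 2 / ((k : ℝ) - 1) ^ 2) ^ 2
          + ∑ j ∈ s, 2 * θ ^ 2 / ((j : ℝ) - 1) ^ 2 := by rw [← h3]; exact h2
      _ ≤ 4 * θ ^ 4 + 4 * θ ^ 2 := by
          rw [ha, hb]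
          set T := ∑ k ∈ s, (1:ℝ) / ((k : ℝ) - 1) ^ 2
          have c1 : θ ^ 2 * T ≤ 2 * θ ^ 2 := by nlinarith [sq_nonneg θ]
          have c2 : 0 ≤ θ ^ 2 * T := by positivity
          have c3 : (θ ^ 2 * T) * (θ ^ 2 * T) ≤ (2 * θ ^ 2) * (2 * θ ^ 2) :=
            mul_self_le_mul_self c2 c1
          nlinarith [c3, c1]
  -- conclude
  have hnonneg : ∀ n : ℕ, 0 ≤ ∫ ω, (∑ k ∈ Finset.Icc 2 n, N k ω) ^ 2 ∂μ :=
    fun n => integral_nonneg fun ω => sq_nonneg _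
  have hrw : (fun n : ℕ =>
        (∫ ω, (∑ k ∈ Finset.Icc 2 n,
            ((M k ω : ℝ) - if 1 ≤ M k ω then 1 else 0)) ^ 2 ∂μ) / Real.log n)
      = fun n : ℕ => (∫ ω, (∑ k ∈ Finset.Icc 2 n, N k ω) ^ 2 ∂μ) / Real.log n :=
    funext fun n => by rw [hfun n]
  rw [hrw]
  have hlog : Tendsto (fun n : ℕ => Real.log n) atTop atTop :=
    Real.tendsto_log_atTop.comp tendsto_natCast_atTop_atTop
  apply squeeze_zero' (g := fun n : ℕ => (4 * θ ^ 4 + 4 * θ ^ 2) / Real.log n)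
  · filter_upwards [eventually_ge_atTop 2] with n hn
    have h1n : (1:ℝ) ≤ (n : ℝ) := by exact_mod_cast Nat.one_le_of_lt hn
    exact div_nonneg (hnonneg n) (Real.log_nonneg h1n)
  · filter_upwards [eventually_ge_atTop 2] with n hn
    have h1n : (1:ℝ) < (n : ℝ) := by exact_mod_cast hn
    have hl : 0 < Real.log n := Real.log_pos h1n
    exact div_le_div_of_nonneg_right (key n) hl.le
  · exact tendsto_const_nhds.div_atTop hlog
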